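/- There exist a constant C > 0 and a natural number n_0 such that for every n ≥ n_0 and every complete simple game χ on n voters, μ(χ) ≤ C · n · log(log n) / log n; that is, the critical threshold value of complete simple games on n voters is in O(n · log log n / log n). -/
import Mathlib


open Finset

/-- `f` is `α`-roughly weighted: there are real weights such that every winning
coalition has weight at least `1` and every losing coalition weight at most `α`. -/
def RoughlyWeighted {n : ℕ} (f : Finset (Fin n) → Bool) (α : ℝ) : Prop :=
  ∃ w : Fin n → ℝ,
    (∀ S : Finset (Fin n), f S = true → 1 ≤ ∑ i ∈ S, w i) ∧
    (∀ S : Finset (Fin n), f S = false → ∑ i ∈ S, w i ≤ α)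

/-- The critical threshold value `μ(f)`: the smallest `α ≥ 1` such that `f` is
`α`-roughly weighted. -/
noncomputable def mu {n : ℕ} (f : Finset (Fin n) → Bool) : ℝ :=
  sInf {α : ℝ | 1 ≤ α ∧ RoughlyWeighted f α}

/-- A simple game: monotone, the empty coalition loses and the grand coalition wins. -/
def SimpleGame {n : ℕ} (χ : Finset (Fin n) → Bool) : Prop :=
  χ ∅ = false ∧ χ Finset.univ = true ∧
    ∀ S T : Finset (Fin n), S ⊆ T → χ S = true → χ T = true

/-- Isbell's desirability relation: `i ⊒ j` iff replacing `j` by `i` in any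
coalition containing `j` but not `i` preserves winning. -/
def Desirable {n : ℕ} (χ : Finset (Fin n) → Bool) (i j : Fin n) : Prop :=
  ∀ S : Finset (Fin n), j ∈ S → i ∉ S →
    χ S = true → χ (insert i (S.erase j)) = true

/-- A complete simple game: a simple game whose desirability relation is total. -/
def CompleteSimpleGame {n : ℕ} (χ : Finset (Fin n) → Bool) : Prop :=
  SimpleGame χ ∧ ∀ i j : Fin n, Desirable χ i j ∨ Desirable χ j i


section Aux

variable {n : ℕ}

lemma desirable_refl {n : ℕ} (χ : Finset (Fin n) → Bool) (i : Fin n) : Desirable χ i i := by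
  intro S hj hi; exact absurd hj hi

lemma desirable_trans {n : ℕ} (χ : Finset (Fin n) → Bool) {i j k : Fin n}
    (hij : Desirable χ i j) (hjk : Desirable χ j k) : Desirable χ i k := by
  intro S hkS hiS hS
  by_cases hji : j = i
  · subst hji; exact hjk S hkS hiS hS
  by_cases hjk' : j = k
  · subst hjk'; exact hij S hkS hiS hS
  by_cases hjS : j ∈ S
  · -- j ∈ S : first swap j→i, then k→j
    have hik : i ≠ k := fun h => hiS (h ▸ hkS)
    have hT : χ (insert i (S.erase j)) = true := hij S hjS hiS hS
    have hkT : k ∈ insert i (S.erase j) := by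
      simp only [Finset.mem_insert, Finset.mem_erase]
      exact Or.inr ⟨fun h => hjk' h.symm, hkS⟩
    have hjT : j ∉ insert i (S.erase j) := by
      simp only [Finset.mem_insert, Finset.mem_erase]
      rintro (h | ⟨h, _⟩) <;> simp_all
    have hU : χ (insert j ((insert i (S.erase j)).erase k)) = true :=
      hjk _ hkT hjT hT
    have : insert j ((insert i (S.erase j)).erase k) = insert i (S.erase k) := by
      ext x
      simp only [Finset.mem_insert, Finset.mem_erase]
      constructor
      · rintro (h | ⟨hk, (h | ⟨hj2, hx⟩)⟩)
        · subst h; exact Or.inr ⟨hjk', hjS⟩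
        · exact Or.inl h
        · exact Or.inr ⟨hk, hx⟩
      · rintro (h | ⟨hk, hx⟩)
        · exact Or.inr ⟨by simp [h, hik], Or.inl h⟩
        · by_cases hxj : x = j
          · exact Or.inl hxj
          · exact Or.inr ⟨hk, Or.inr ⟨hxj, hx⟩⟩
    rwa [this] at hU
  · -- j ∉ S : first swap k→j, then j→i
    have hik : i ≠ k := fun h => hiS (h ▸ hkS)
    have hU : χ (insert j (S.erase k)) = true := hjk S hkS hjS hS
    have hiU : i ∉ insert j (S.erase k) := by
      simp only [Finset.mem_insert, Finset.mem_erase]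
      rintro (h | ⟨_, hx⟩)
      · exact hji h.symm
      · exact hiS hx
    have hjU : j ∈ insert j (S.erase k) := Finset.mem_insert_self _ _
    have hV : χ (insert i ((insert j (S.erase k)).erase j)) = true :=
      hij _ hjU hiU hU
    have : (insert j (S.erase k)).erase j = S.erase k := by
      rw [Finset.erase_insert]
      simp only [Finset.mem_erase]
      rintro ⟨_, hx⟩; exact hjS hx
    rwa [this] at hV

/-- number of elements of `A` with value `≤ j` -/
def cnt (A : Finset (Fin n)) (j : ℕ) : ℕ := (A.filter (fun x : Fin n => (x : ℕ) ≤ j)).card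

lemma interval_card (a b : ℕ) (hb : b < n) :
    ((univ : Finset (Fin n)).filter (fun x : Fin n => a ≤ (x : ℕ) ∧ (x : ℕ) ≤ b)).card = b + 1 - a := by
  classical
  rw [← Nat.card_Ico a (b+1)]
  apply Finset.card_bij (fun (x : Fin n) _ => (x : ℕ))
  · intro x hx
    simp only [Finset.mem_filter] at hx
    simp only [Finset.mem_Ico]
    omega
  · intro x hx y hy h
    exact Fin.ext h
  · intro y hy
    simp only [Finset.mem_Ico] at hy
    refine ⟨⟨y, by omega⟩, ?_, rfl⟩
    simp only [Finset.mem_filter, Finset.mem_univ, true_and]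
    exact ⟨by omega, by omega⟩

lemma cnt_le_card (A : Finset (Fin n)) (j : ℕ) : cnt A j ≤ A.card :=
  Finset.card_le_card (Finset.filter_subset _ _)

lemma cnt_mono (A : Finset (Fin n)) {j k : ℕ} (h : j ≤ k) : cnt A j ≤ cnt A k := by
  apply Finset.card_le_card
  intro x hx
  simp only [Finset.mem_filter] at hx ⊢
  exact ⟨hx.1, hx.2.trans h⟩

lemma cnt_eq_card_of (A : Finset (Fin n)) {j : ℕ} (h : ∀ x ∈ A, (x : ℕ) ≤ j) :
    cnt A j = A.card := by
  unfold cnt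
  rw [Finset.filter_true_of_mem h]

/-- splitting: card = cnt + number above -/
lemma card_split (A : Finset (Fin n)) (j : ℕ) :
    A.card = cnt A j + (A.filter (fun x : Fin n => j < (x : ℕ))).card := by
  unfold cnt
  rw [← Finset.card_filter_add_card_filter_not (p := fun x : Fin n => (x : ℕ) ≤ j)]
  congr 1
  apply congrArg
  apply Finset.filter_congr
  intro x _
  simp [Nat.not_le]

lemma card_above_le (A : Finset (Fin n)) (j : ℕ) (hj : j < n) :
    (A.filter (fun x : Fin n => j < (x : ℕ))).card ≤ n - (j + 1) := by
  calc (A.filter (fun x : Fin n => j < (x : ℕ))).card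
      ≤ ((univ : Finset (Fin n)).filter (fun x : Fin n => j + 1 ≤ (x : ℕ) ∧ (x : ℕ) ≤ n - 1)).card := by
        apply Finset.card_le_card
        intro x hx
        simp only [Finset.mem_filter] at hx ⊢
        refine ⟨Finset.mem_univ _, by omega, ?_⟩
        have := x.isLt; omega
    _ = n - (j + 1) := by
        rw [interval_card _ _ (by omega)]
        omega

/-- lower bound on cnt -/
lemma cnt_lower (A : Finset (Fin n)) (j : ℕ) (hj : j < n) :
    A.card ≤ cnt A j + (n - (j + 1)) := by
  have := card_split A j
  have := card_above_le A j hj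
  omega

/-- if all elements of A are < t, better lower bound -/
lemma cnt_lower_bdd (A : Finset (Fin n)) (j t : ℕ) (hjn : j < n)
    (hA : ∀ x ∈ A, (x : ℕ) < t) :
    A.card ≤ cnt A j + (t - (j + 1)) := by
  have h1 := card_split A j
  have h2 : (A.filter (fun x : Fin n => j < (x : ℕ))).card ≤ t - (j + 1) := by
    by_cases htn : t ≤ n
    · by_cases hjt : j + 1 ≤ t
      · by_cases ht0 : t = 0
        · omega
        calc (A.filter (fun x : Fin n => j < (x : ℕ))).card
            ≤ ((univ : Finset (Fin n)).filter (fun x : Fin n => j + 1 ≤ (x : ℕ) ∧ (x : ℕ) ≤ t - 1)).card := by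
              apply Finset.card_le_card
              intro x hx
              simp only [Finset.mem_filter] at hx ⊢
              have := hA x hx.1
              exact ⟨Finset.mem_univ _, by omega, by omega⟩
          _ = t - (j + 1) := by rw [interval_card _ _ (by omega)]; omega
      · -- t ≤ j : no elements above j
        have : A.filter (fun x : Fin n => j < (x : ℕ)) = ∅ := by
          apply Finset.filter_eq_empty_iff.mpr
          intro x hx
          have := hA x hx
          omega
        rw [this]; simp
    · have := card_above_le A j hjn
      omega
  omega

/-- pigeonhole: if cnt A j ≥ j + 1 with j < n then every value ≤ j is in A -/
lemma mem_of_cnt_ge (A : Finset (Fin n)) (j : ℕ) (hj : j < n) (h : j + 1 ≤ cnt A j)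
    (x : Fin n) (hx : (x : ℕ) ≤ j) : x ∈ A := by
  have hsub : A.filter (fun y : Fin n => (y : ℕ) ≤ j) ⊆
      (univ : Finset (Fin n)).filter (fun y : Fin n => 0 ≤ (y : ℕ) ∧ (y : ℕ) ≤ j) := by
    intro y hy
    simp only [Finset.mem_filter] at hy ⊢
    exact ⟨Finset.mem_univ _, Nat.zero_le _, hy.2⟩
  have hcard : ((univ : Finset (Fin n)).filter (fun y : Fin n => 0 ≤ (y : ℕ) ∧ (y : ℕ) ≤ j)).card = j + 1 := by
    rw [interval_card _ _ hj]
    omega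
  have heq : A.filter (fun y : Fin n => (y : ℕ) ≤ j) =
      (univ : Finset (Fin n)).filter (fun y : Fin n => 0 ≤ (y : ℕ) ∧ (y : ℕ) ≤ j) :=
    Finset.eq_of_subset_of_card_le hsub (by unfold cnt at h; omega)
  have : x ∈ A.filter (fun y : Fin n => (y : ℕ) ≤ j) := by
    rw [heq]
    simp only [Finset.mem_filter]
    exact ⟨Finset.mem_univ _, Nat.zero_le _, hx⟩
  exact (Finset.mem_filter.mp this).1

/-- `A` dominates `B`: same size, and at least as many elements below any threshold. -/
def Dom (A B : Finset (Fin n)) : Prop :=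
  A.card = B.card ∧ ∀ j, j < n → cnt B j ≤ cnt A j

lemma cnt_split (A : Finset (Fin n)) (j k : ℕ) (hjk : j ≤ k) :
    cnt A k = cnt A j + (A.filter (fun x : Fin n => j < (x : ℕ) ∧ (x : ℕ) ≤ k)).card := by
  unfold cnt
  have hun : A.filter (fun x : Fin n => (x : ℕ) ≤ k) =
      A.filter (fun x : Fin n => (x : ℕ) ≤ j) ∪ A.filter (fun x : Fin n => j < (x : ℕ) ∧ (x : ℕ) ≤ k) := by
    ext x
    simp only [Finset.mem_filter, Finset.mem_union]
    constructor
    · intro ⟨hx, hk⟩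
      rcases Nat.lt_or_ge j (x : ℕ) with h | h
      · exact Or.inr ⟨hx, h, hk⟩
      · exact Or.inl ⟨hx, h⟩
    · rintro (⟨hx, h⟩ | ⟨hx, _, h⟩)
      · exact ⟨hx, h.trans hjk⟩
      · exact ⟨hx, h⟩
  rw [hun, Finset.card_union_of_disjoint]
  rw [Finset.disjoint_left]
  intro x hx1 hx2
  simp only [Finset.mem_filter] at hx1 hx2
  omega

lemma interval_subset_card {A : Finset (Fin n)} {j k : ℕ} (hk : k < n)
    (h : ∀ x : Fin n, j < (x : ℕ) → (x : ℕ) ≤ k → x ∈ A) :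
    k - j ≤ (A.filter (fun x : Fin n => j < (x : ℕ) ∧ (x : ℕ) ≤ k)).card := by
  have hsub : (univ : Finset (Fin n)).filter (fun x : Fin n => j + 1 ≤ (x : ℕ) ∧ (x : ℕ) ≤ k)
      ⊆ A.filter (fun x : Fin n => j < (x : ℕ) ∧ (x : ℕ) ≤ k) := by
    intro x hx
    simp only [Finset.mem_filter] at hx ⊢
    exact ⟨h x (by omega) hx.2.2, by omega, hx.2.2⟩
  have := Finset.card_le_card hsub
  rw [interval_card _ _ hk] at this
  omega

lemma mem_of_interval_full {A : Finset (Fin n)} {j : ℕ} {b : Fin n} (hjb : j < (b : ℕ))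
    (h : (b : ℕ) - j ≤ (A.filter (fun x : Fin n => j < (x : ℕ) ∧ (x : ℕ) ≤ (b : ℕ))).card) :
    b ∈ A := by
  have hsub : A.filter (fun x : Fin n => j < (x : ℕ) ∧ (x : ℕ) ≤ (b : ℕ))
      ⊆ (univ : Finset (Fin n)).filter (fun x : Fin n => j + 1 ≤ (x : ℕ) ∧ (x : ℕ) ≤ (b : ℕ)) := by
    intro x hx
    simp only [Finset.mem_filter] at hx ⊢
    exact ⟨Finset.mem_univ _, by omega, hx.2.2⟩
  have hic := interval_card (n := n) (j + 1) (b : ℕ) b.isLt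
  have heq := Finset.eq_of_subset_of_card_le hsub (by omega)
  have : b ∈ A.filter (fun x : Fin n => j < (x : ℕ) ∧ (x : ℕ) ≤ (b : ℕ)) := by
    rw [heq]
    simp only [Finset.mem_filter]
    exact ⟨Finset.mem_univ _, by omega, le_refl _⟩
  exact (Finset.mem_filter.mp this).1

/-- cnt of an insert -/
lemma cnt_insert (A : Finset (Fin n)) (c : Fin n) (hc : c ∉ A) (j : ℕ) :
    cnt (insert c A) j = cnt A j + (if (c : ℕ) ≤ j then 1 else 0) := by
  unfold cnt
  rw [Finset.filter_insert]
  by_cases h : (c : ℕ) ≤ j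
  · rw [if_pos h, if_pos h, Finset.card_insert_of_notMem (fun hm => hc (Finset.mem_filter.mp hm).1)]
  · rw [if_neg h, if_neg h, Nat.add_zero]

lemma cnt_erase (A : Finset (Fin n)) (b : Fin n) (hb : b ∈ A) (j : ℕ) :
    cnt A j = cnt (A.erase b) j + (if (b : ℕ) ≤ j then 1 else 0) := by
  unfold cnt
  rw [Finset.filter_erase]
  split
  · rename_i h
    rw [Finset.card_erase_add_one]
    exact Finset.mem_filter.mpr ⟨hb, h⟩
  · rw [Finset.erase_eq_of_notMem]
    · simp
    · intro hmem
      exact (by assumption : ¬ ((b:ℕ) ≤ j)) (Finset.mem_filter.mp hmem).2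

/-- Key: a set dominating a winning set is winning. -/
lemma dom_win (χ : Finset (Fin n) → Bool)
    (H : ∀ s t : Fin n, s ≤ t → Desirable χ s t) :
    ∀ N, ∀ B A : Finset (Fin n), (∑ x ∈ B, (x : ℕ)) ≤ N → Dom A B → χ B = true → χ A = true := by
  intro N
  induction N using Nat.strong_induction_on with
  | _ N IH =>
    intro B A hsum hdom hB
    by_cases hAB : A = B
    · rwa [hAB]
    -- B \ A nonempty
    have hBA : (B \ A).Nonempty := by
      rw [Finset.sdiff_nonempty]
      intro hsub
      exact hAB (Finset.eq_of_subset_of_card_le hsub (le_of_eq hdom.1)).symm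
    -- b = min (B \ A)
    obtain ⟨b, hbmem, hbmin⟩ := (B \ A).exists_min_image (fun x : Fin n => (x : ℕ)) hBA
    have hbB : b ∈ B := (Finset.mem_sdiff.mp hbmem).1
    have hbA : b ∉ A := (Finset.mem_sdiff.mp hbmem).2
    -- the set of candidates c
    set C := (univ : Finset (Fin n)).filter (fun x : Fin n => (x : ℕ) < (b : ℕ) ∧ x ∉ B) with hC
    have hCne : C.Nonempty := by
      by_contra hne
      rw [Finset.not_nonempty_iff_eq_empty] at hne
      -- then all values < b are in B
      have hall : ∀ x : Fin n, (x : ℕ) < (b : ℕ) → x ∈ B := by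
        intro x hx
        by_contra hxB
        have : x ∈ C := by
          rw [hC]; simp only [Finset.mem_filter]
          exact ⟨Finset.mem_univ _, hx, hxB⟩
        rw [hne] at this
        exact absurd this (Finset.notMem_empty x)
      -- cnt B b.val = b.val + 1
      have hcntB : (b : ℕ) + 1 ≤ cnt B (b : ℕ) := by
        have hsub : (univ : Finset (Fin n)).filter (fun y : Fin n => 0 ≤ (y : ℕ) ∧ (y : ℕ) ≤ (b : ℕ))
            ⊆ B.filter (fun y : Fin n => (y : ℕ) ≤ (b : ℕ)) := by
          intro y hy
          simp only [Finset.mem_filter] at hy ⊢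
          rcases Nat.lt_or_ge (y : ℕ) (b : ℕ) with h | h
          · exact ⟨hall y h, hy.2.2⟩
          · have : y = b := Fin.ext (le_antisymm hy.2.2 h)
            exact ⟨this ▸ hbB, hy.2.2⟩
        have := Finset.card_le_card hsub
        have hic : ((univ : Finset (Fin n)).filter (fun y : Fin n => 0 ≤ (y : ℕ) ∧ (y : ℕ) ≤ (b:ℕ))).card = (b:ℕ) + 1 := by
          rw [interval_card _ _ b.isLt]
          omega
        unfold cnt
        omega
      have hcntA := hdom.2 (b : ℕ) b.isLt
      have : b ∈ A := mem_of_cnt_ge A (b : ℕ) b.isLt (by omega) b (le_refl _)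
      exact hbA this
    -- c = max C
    obtain ⟨c, hcmem, hcmax⟩ := C.exists_max_image (fun x : Fin n => (x : ℕ)) hCne
    rw [hC] at hcmem
    simp only [Finset.mem_filter] at hcmem
    have hcb : (c : ℕ) < (b : ℕ) := hcmem.2.1
    have hcB : c ∉ B := hcmem.2.2
    -- B' = insert c (B.erase b) wins
    set B' := insert c (B.erase b) with hB'
    have hB'win : χ B' = true := H c b (le_of_lt hcb) B hbB hcB hB
    have hcnotin : c ∉ B.erase b := fun h => hcB (Finset.mem_erase.mp h).2
    have hcardB' : B'.card = B.card := by
      rw [hB', Finset.card_insert_of_notMem hcnotin, Finset.card_erase_of_mem hbB]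
      have : 1 ≤ B.card := Finset.card_pos.mpr ⟨b, hbB⟩
      omega
    -- sum decreases
    have hsum' : (∑ x ∈ B', (x : ℕ)) < (∑ x ∈ B, (x : ℕ)) := by
      rw [hB', Finset.sum_insert hcnotin]
      have hkey : (∑ x ∈ B.erase b, (x : ℕ)) + (b : ℕ) = ∑ x ∈ B, (x : ℕ) := by
        simpa using Finset.sum_erase_add B (fun x : Fin n => (x : ℕ)) hbB
      omega
    -- cnt B' j
    have hcntB' : ∀ j, cnt B' j = cnt (B.erase b) j + (if (c:ℕ) ≤ j then 1 else 0) :=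
      fun j => cnt_insert _ c hcnotin j
    have hcntBe : ∀ j, cnt B j = cnt (B.erase b) j + (if (b:ℕ) ≤ j then 1 else 0) :=
      fun j => cnt_erase B b hbB j
    -- Dom A B'
    have hdom' : Dom A B' := by
      constructor
      · rw [hcardB']; exact hdom.1
      · intro j hj
        rcases Nat.lt_or_ge j (c : ℕ) with hjc | hjc
        · -- j < c : cnt B' j = cnt B j
          have : cnt B' j = cnt B j := by
            rw [hcntB' j, hcntBe j]
            have h1 : ¬ ((c:ℕ) ≤ j) := by omega
            have h2 : ¬ ((b:ℕ) ≤ j) := by omega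
            simp [h1, h2]
          rw [this]; exact hdom.2 j hj
        rcases Nat.lt_or_ge j (b : ℕ) with hjb | hjb
        · -- c ≤ j < b : cnt B' j = cnt B j + 1, need cnt A j ≥ cnt B j + 1
          have hBj : cnt B' j = cnt B j + 1 := by
            rw [hcntB' j, hcntBe j]
            have h1 : (c:ℕ) ≤ j := hjc
            have h2 : ¬ ((b:ℕ) ≤ j) := by omega
            simp [h1, h2]
          rw [hBj]
          by_contra hlt
          have hAeq : cnt A j = cnt B j := le_antisymm (by omega) (hdom.2 j hj)
          -- all values in (j, b] are in B
          have hint : ∀ x : Fin n, j < (x : ℕ) → (x : ℕ) ≤ (b : ℕ) → x ∈ B := by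
            intro x hx1 hx2
            rcases Nat.lt_or_ge (x : ℕ) (b : ℕ) with h | h
            · by_contra hxB
              have hxC : x ∈ C := by
                rw [hC]; simp only [Finset.mem_filter]
                exact ⟨Finset.mem_univ _, h, hxB⟩
              have := hcmax x hxC
              omega
            · have : x = b := Fin.ext (le_antisymm hx2 h)
              exact this ▸ hbB
          -- cnt B b = cnt B j + (b - j)
          have hcBb : cnt B (b : ℕ) ≥ cnt B j + ((b:ℕ) - j) := by
            have hs := cnt_split B j (b : ℕ) (by omega)
            have hi := interval_subset_card (A := B) (j := j) (k := (b:ℕ)) b.isLt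
              (fun x hx1 hx2 => hint x hx1 hx2)
            omega
          -- then cnt A b ≥ cnt A j + (b - j), so all of (j,b] ⊆ A, contradiction b ∉ A
          have hcAb : cnt A (b:ℕ) ≥ cnt A j + ((b:ℕ) - j) := by
            have := hdom.2 (b:ℕ) b.isLt
            omega
          have hbinA : b ∈ A := by
            have hsA := cnt_split A j (b : ℕ) (by omega)
            exact mem_of_interval_full (j := j) (by omega) (by omega)
          exact hbA hbinA
        · -- j ≥ b : cnt B' j = cnt B j
          have : cnt B' j = cnt B j := by
            rw [hcntB' j, hcntBe j]
            have h1 : (c:ℕ) ≤ j := by omega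
            have h2 : (b:ℕ) ≤ j := hjb
            simp [h1, h2]
          rw [this]; exact hdom.2 j hj
    exact IH (∑ x ∈ B', (x : ℕ)) (by omega) B' A (le_refl _) hdom' hB'win

/-- bottom `s` voters (weakest ranks) -/
def bot (n s : ℕ) : Finset (Fin n) := (univ : Finset (Fin n)).filter (fun x : Fin n => n - s ≤ (x : ℕ))

/-- block of `s` voters starting at rank `lo` -/
def blk (n lo s : ℕ) : Finset (Fin n) :=
  (univ : Finset (Fin n)).filter (fun x : Fin n => lo ≤ (x : ℕ) ∧ (x : ℕ) < lo + s)

lemma bot_card {s : ℕ} (hs : s ≤ n) (hn : 1 ≤ n) : (bot n s).card = s := by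
  unfold bot
  have : ((univ : Finset (Fin n)).filter (fun x : Fin n => n - s ≤ (x : ℕ))) =
      ((univ : Finset (Fin n)).filter (fun x : Fin n => n - s ≤ (x : ℕ) ∧ (x : ℕ) ≤ n - 1)) := by
    apply Finset.filter_congr
    intro x _
    have := x.isLt
    constructor <;> intro h
    · exact ⟨h, by omega⟩
    · exact h.1
  rw [this, interval_card _ _ (by omega)]
  omega

lemma bot_mono {s s' : ℕ} (h : s ≤ s') : bot n s ⊆ bot n s' := by
  unfold bot
  intro x hx
  simp only [Finset.mem_filter] at hx ⊢
  exact ⟨hx.1, by omega⟩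

lemma bot_univ : bot n n = (univ : Finset (Fin n)) := by
  unfold bot
  apply Finset.filter_true_of_mem
  intro x _
  omega

lemma bot_zero (hn : 1 ≤ n) : bot n 0 = (∅ : Finset (Fin n)) := by
  unfold bot
  apply Finset.filter_false_of_mem
  intro x _
  have := x.isLt
  omega

lemma blk_card {lo s : ℕ} (hs : 1 ≤ s) (hls : lo + s ≤ n) : (blk n lo s).card = s := by
  unfold blk
  have : ((univ : Finset (Fin n)).filter (fun x : Fin n => lo ≤ (x : ℕ) ∧ (x : ℕ) < lo + s)) =
      ((univ : Finset (Fin n)).filter (fun x : Fin n => lo ≤ (x : ℕ) ∧ (x : ℕ) ≤ lo + s - 1)) := by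
    apply Finset.filter_congr
    intro x _
    constructor <;> intro h <;> exact ⟨h.1, by omega⟩
  rw [this, interval_card _ _ (by omega)]
  omega

lemma blk_mono {lo s s' : ℕ} (h : s ≤ s') : blk n lo s ⊆ blk n lo s' := by
  unfold blk
  intro x hx
  simp only [Finset.mem_filter] at hx ⊢
  exact ⟨hx.1, hx.2.1, by omega⟩

/-- Dom instance (i): any set dominates the bottom set of its size. -/
lemma dom_bot (hn : 1 ≤ n) (A : Finset (Fin n)) : Dom A (bot n A.card) := by
  have hcard : A.card ≤ n := le_trans (Finset.card_le_card (Finset.subset_univ A)) (by simp)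
  constructor
  · rw [bot_card hcard hn]
  · intro j hj
    have hbcnt : cnt (bot n A.card) j = j + 1 - (n - A.card) := by
      unfold cnt bot
      rw [Finset.filter_filter, interval_card _ _ hj]
    have := cnt_lower A j hj
    omega

/-- Dom instance (ii): the leading block of the tail dominates any tail set of its size. -/
lemma dom_blk_tail {t : ℕ} (S : Finset (Fin n)) (hS : ∀ x ∈ S, t ≤ (x : ℕ))
    (hs1 : 1 ≤ S.card) (hts : t + S.card ≤ n) : Dom (blk n t S.card) S := by
  constructor
  · rw [blk_card hs1 hts]
  · intro j hj
    have hScnt : cnt S j ≤ j + 1 - t := by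
      have hsub : S.filter (fun x : Fin n => (x : ℕ) ≤ j) ⊆
          (univ : Finset (Fin n)).filter (fun x : Fin n => t ≤ (x : ℕ) ∧ (x : ℕ) ≤ j) := by
        intro x hx
        simp only [Finset.mem_filter] at hx ⊢
        exact ⟨Finset.mem_univ _, hS x hx.1, hx.2⟩
      have := Finset.card_le_card hsub
      rw [interval_card _ _ hj] at this
      exact this
    have hScard : cnt S j ≤ S.card := cnt_le_card S j
    have hbcnt : cnt (blk n t S.card) j = min (j + 1 - t) S.card := by
      unfold cnt blk
      rw [Finset.filter_filter]
      rcases Nat.lt_or_ge j (t + S.card) with h | h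
      · have : ((univ : Finset (Fin n)).filter (fun x : Fin n => (t ≤ (x:ℕ) ∧ (x:ℕ) < t + S.card) ∧ (x:ℕ) ≤ j)) =
            ((univ : Finset (Fin n)).filter (fun x : Fin n => t ≤ (x:ℕ) ∧ (x:ℕ) ≤ j)) := by
          apply Finset.filter_congr
          intro x _
          constructor <;> intro hh
          · exact ⟨hh.1.1, hh.2⟩
          · exact ⟨⟨hh.1, by omega⟩, hh.2⟩
        rw [this, interval_card _ _ hj]
        omega
      · have : ((univ : Finset (Fin n)).filter (fun x : Fin n => (t ≤ (x:ℕ) ∧ (x:ℕ) < t + S.card) ∧ (x:ℕ) ≤ j)) =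
            ((univ : Finset (Fin n)).filter (fun x : Fin n => t ≤ (x:ℕ) ∧ (x:ℕ) ≤ t + S.card - 1)) := by
          apply Finset.filter_congr
          intro x _
          constructor <;> intro hh
          · exact ⟨hh.1.1, by omega⟩
          · exact ⟨⟨hh.1, by omega⟩, by omega⟩
        rw [this, interval_card _ _ (by omega)]
        omega
    omega

/-- Dom instance (v): any p-subset of the top t dominates the trailing block [t-p, t). -/
lemma dom_topblock {t p : ℕ} (P : Finset (Fin n)) (hP : ∀ x ∈ P, (x : ℕ) < t)
    (hp : P.card = p) (hp1 : 1 ≤ p) (hpt : p ≤ t) (htn : t ≤ n) : Dom P (blk n (t - p) p) := by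
  constructor
  · rw [hp, blk_card hp1 (by omega)]
  · intro j hj
    have hbcnt : cnt (blk n (t - p) p) j = min (j + 1 - (t - p)) p := by
      unfold cnt blk
      rw [Finset.filter_filter]
      rcases Nat.lt_or_ge j ((t - p) + p) with h | h
      · have : ((univ : Finset (Fin n)).filter (fun x : Fin n => ((t-p) ≤ (x:ℕ) ∧ (x:ℕ) < (t-p) + p) ∧ (x:ℕ) ≤ j)) =
            ((univ : Finset (Fin n)).filter (fun x : Fin n => (t-p) ≤ (x:ℕ) ∧ (x:ℕ) ≤ j)) := by
          apply Finset.filter_congr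
          intro x _
          constructor <;> intro hh
          · exact ⟨hh.1.1, hh.2⟩
          · exact ⟨⟨hh.1, by omega⟩, hh.2⟩
        rw [this, interval_card _ _ hj]
        omega
      · have : ((univ : Finset (Fin n)).filter (fun x : Fin n => ((t-p) ≤ (x:ℕ) ∧ (x:ℕ) < (t-p) + p) ∧ (x:ℕ) ≤ j)) =
            ((univ : Finset (Fin n)).filter (fun x : Fin n => (t-p) ≤ (x:ℕ) ∧ (x:ℕ) ≤ (t-p) + p - 1)) := by
          apply Finset.filter_congr
          intro x _
          constructor <;> intro hh
          · exact ⟨hh.1.1, by omega⟩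
          · exact ⟨⟨hh.1, by omega⟩, by omega⟩
        rw [this, interval_card _ _ (by omega)]
        omega
    rcases Nat.lt_or_ge j (t - 1) with hjt | hjt
    · have := cnt_lower_bdd P j t hj hP
      omega
    · have : cnt P j = P.card := by
        apply cnt_eq_card_of
        intro x hx
        have := hP x hx
        omega
      omega

/-- The main construction: every "sorted" complete simple game is 2√n-roughly weighted. -/
lemma sorted_roughly_weighted (χ : Finset (Fin n) → Bool) (hn : 1 ≤ n)
    (hsg : SimpleGame χ) (H : ∀ s t : Fin n, s ≤ t → Desirable χ s t) :
    RoughlyWeighted χ (2 * Real.sqrt n) := by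
  classical
  obtain ⟨hempty, huniv, hmono⟩ := hsg
  have hsqrt_pos : (0:ℝ) < Real.sqrt n := Real.sqrt_pos.mpr (by exact_mod_cast hn)
  -- r : minimal size of a winning bottom set
  have hrex : ∃ s, s ≤ n ∧ χ (bot n s) = true := ⟨n, le_refl n, by rw [bot_univ]; exact huniv⟩
  set r := Nat.find hrex with hrdef
  have hrn : r ≤ n := (Nat.find_spec hrex).1
  have hrwin : χ (bot n r) = true := (Nat.find_spec hrex).2
  have hr1 : 1 ≤ r := by
    by_contra h
    have hr0 : r = 0 := by omega
    have : χ (bot n 0) = true := hr0 ▸ hrwin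
    rw [bot_zero hn, hempty] at this
    exact Bool.false_ne_true this
  -- losing sets are smaller than r
  have hlose_card : ∀ L : Finset (Fin n), χ L = false → L.card < r := by
    intro L hL
    by_contra hge
    push_neg at hge
    have hwinbot : χ (bot n L.card) = true := hmono _ _ (bot_mono hge) hrwin
    have := dom_win χ H _ _ L (le_refl _) (dom_bot hn L) hwinbot
    rw [hL] at this
    exact Bool.false_ne_true this
  -- θ = r / √n ≤ √n
  set θ : ℝ := (r : ℝ) / Real.sqrt n with hθdef
  have hθpos : 0 < θ := div_pos (by exact_mod_cast hr1) hsqrt_pos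
  have hθle : θ ≤ Real.sqrt n := by
    rw [hθdef, div_le_iff₀ hsqrt_pos, Real.mul_self_sqrt (by positivity)]
    exact_mod_cast hrn
  -- t : first index where the tail has no small winning block
  have hDex : ∃ i, i = n ∨ ¬ (∃ s, 1 ≤ s ∧ i + s ≤ n ∧ χ (blk n i s) = true ∧ (s : ℝ) < θ) :=
    ⟨n, Or.inl rfl⟩
  set t := Nat.find hDex with htdef
  have htn : t ≤ n := Nat.find_le (Or.inl rfl)
  have hGlt : ∀ i, i < t → ∃ s, 1 ≤ s ∧ i + s ≤ n ∧ χ (blk n i s) = true ∧ (s : ℝ) < θ := by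
    intro i hi
    have h := Nat.find_min hDex hi
    push_neg at h
    exact h.2
  have hDt : t = n ∨ ¬ (∃ s, 1 ≤ s ∧ t + s ≤ n ∧ χ (blk n t s) = true ∧ (s : ℝ) < θ) :=
    Nat.find_spec hDex
  -- winning tail sets give winning blocks
  have tailwin : ∀ S : Finset (Fin n), χ S = true → (∀ x ∈ S, t ≤ (x : ℕ)) →
      1 ≤ S.card ∧ t + S.card ≤ n ∧ χ (blk n t S.card) = true := by
    intro S hSwin hStail
    have hSne : S.Nonempty := by
      rcases Finset.eq_empty_or_nonempty S with h | h
      · exfalso; rw [h, hempty] at hSwin; exact Bool.false_ne_true hSwin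
      · exact h
    have hs1 : 1 ≤ S.card := Finset.card_pos.mpr hSne
    have hts : t + S.card ≤ n := by
      have hsub : S ⊆ (univ : Finset (Fin n)).filter (fun x : Fin n => t ≤ (x:ℕ) ∧ (x:ℕ) ≤ n - 1) := by
        intro x hx
        simp only [Finset.mem_filter]
        have := x.isLt
        exact ⟨Finset.mem_univ _, hStail x hx, by omega⟩
      have := Finset.card_le_card hsub
      rw [interval_card _ _ (by omega)] at this
      omega
    exact ⟨hs1, hts, dom_win χ H _ _ _ (le_refl _) (dom_blk_tail S hStail hs1 hts) hSwin⟩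
  -- the tail weight bw
  obtain ⟨bw, hbw0, hbwwin, hbwlose⟩ :
      ∃ bw : ℝ, 0 ≤ bw ∧
        (∀ S : Finset (Fin n), χ S = true → (∀ x ∈ S, t ≤ (x : ℕ)) → 1 ≤ (S.card : ℝ) * bw) ∧
        ((r : ℝ) - 1) * bw ≤ Real.sqrt n := by
    by_cases hw : ∃ s, 1 ≤ s ∧ t + s ≤ n ∧ χ (blk n t s) = true
    · set s₀ := Nat.find hw with hs₀def
      have hs₀1 : 1 ≤ s₀ := (Nat.find_spec hw).1
      have hs₀n : t + s₀ ≤ n := (Nat.find_spec hw).2.1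
      have hs₀win : χ (blk n t s₀) = true := (Nat.find_spec hw).2.2
      have hnGt : ¬ (∃ s, 1 ≤ s ∧ t + s ≤ n ∧ χ (blk n t s) = true ∧ (s : ℝ) < θ) := by
        rcases hDt with h | h
        · exfalso; omega
        · exact h
      have hs₀θ : θ ≤ (s₀ : ℝ) := by
        by_contra hlt
        push_neg at hlt
        exact hnGt ⟨s₀, hs₀1, hs₀n, hs₀win, hlt⟩
      refine ⟨1 / (s₀ : ℝ), by positivity, ?_, ?_⟩
      · intro S hSwin hStail
        obtain ⟨h1, h2, h3⟩ := tailwin S hSwin hStail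
        have hfind : s₀ ≤ S.card := Nat.find_le ⟨h1, h2, h3⟩
        rw [mul_one_div, le_div_iff₀ (by exact_mod_cast hs₀1 : (0:ℝ) < (s₀:ℝ))]
        rw [one_mul]
        exact_mod_cast hfind
      · -- (r-1)/s₀ ≤ √n  since s₀ ≥ θ = r/√n
        rw [mul_one_div, div_le_iff₀ (by exact_mod_cast hs₀1 : (0:ℝ) < (s₀:ℝ))]
        have h2 : θ * Real.sqrt n = (r : ℝ) := by
          rw [hθdef, div_mul_cancel₀]
          exact ne_of_gt hsqrt_pos
        calc ((r:ℝ) - 1) ≤ (r : ℝ) - 1 := le_refl _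
          _ ≤ θ * Real.sqrt n - 1 := by rw [h2]
          _ ≤ (s₀ : ℝ) * Real.sqrt n - 1 := by nlinarith
          _ ≤ Real.sqrt n * (s₀ : ℝ) := by nlinarith
    · refine ⟨0, le_refl 0, ?_, by rw [mul_zero]; positivity⟩
      intro S hSwin hStail
      obtain ⟨h1, h2, h3⟩ := tailwin S hSwin hStail
      exact absurd ⟨S.card, h1, h2, h3⟩ hw
  -- the weights
  set w : Fin n → ℝ := fun x => if (x : ℕ) < t then 1 else bw with hwdef
  have hwnn : ∀ x : Fin n, 0 ≤ w x := by
    intro x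
    rw [hwdef]
    dsimp only
    split
    · exact zero_le_one
    · exact hbw0
  -- sum formula
  have hsum : ∀ S : Finset (Fin n), ∑ x ∈ S, w x =
      ((S.filter (fun x : Fin n => (x : ℕ) < t)).card : ℝ) +
      ((S.filter (fun x : Fin n => ¬ (x : ℕ) < t)).card : ℝ) * bw := by
    intro S
    rw [← Finset.sum_filter_add_sum_filter_not S (fun x : Fin n => (x : ℕ) < t)]
    have e1 : ∑ x ∈ S.filter (fun x : Fin n => (x : ℕ) < t), w x
        = ((S.filter (fun x : Fin n => (x : ℕ) < t)).card : ℝ) := by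
      have h1 : ∀ x ∈ S.filter (fun x : Fin n => (x : ℕ) < t), w x = 1 := by
        intro x hx
        rw [hwdef]
        exact if_pos (Finset.mem_filter.mp hx).2
      rw [Finset.sum_congr rfl h1, Finset.sum_const, nsmul_eq_mul, mul_one]
    have e2 : ∑ x ∈ S.filter (fun x : Fin n => ¬ (x : ℕ) < t), w x
        = ((S.filter (fun x : Fin n => ¬ (x : ℕ) < t)).card : ℝ) * bw := by
      have h2 : ∀ x ∈ S.filter (fun x : Fin n => ¬ (x : ℕ) < t), w x = bw := by
        intro x hx
        rw [hwdef]
        exact if_neg (Finset.mem_filter.mp hx).2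
      rw [Finset.sum_congr rfl h2, Finset.sum_const, nsmul_eq_mul]
    rw [e1, e2]
  refine ⟨w, ?_, ?_⟩
  · -- winning
    intro S hSwin
    by_cases hex : ∃ x ∈ S, (x : ℕ) < t
    · obtain ⟨x, hxS, hxt⟩ := hex
      have : w x ≤ ∑ y ∈ S, w y := Finset.single_le_sum (fun y _ => hwnn y) hxS
      rw [hwdef] at this
      dsimp only at this
      rw [if_pos hxt] at this
      exact this
    · push_neg at hex
      have hStail : ∀ x ∈ S, t ≤ (x : ℕ) := fun x hx => hex x hx
      have h1 := hbwwin S hSwin hStail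
      rw [hsum S]
      have hfe : S.filter (fun x : Fin n => (x : ℕ) < t) = ∅ := by
        apply Finset.filter_false_of_mem
        intro x hx
        exact not_lt.mpr (hStail x hx)
      have hfne : S.filter (fun x : Fin n => ¬ (x : ℕ) < t) = S := by
        apply Finset.filter_true_of_mem
        intro x hx
        exact not_lt.mpr (hStail x hx)
      rw [hfe, hfne]
      simpa using h1
  · -- losing
    intro L hL
    rw [hsum L]
    set p := (L.filter (fun x : Fin n => (x : ℕ) < t)).card with hpdef
    have hLr : L.card < r := hlose_card L hL
    have hq : (L.filter (fun x : Fin n => ¬ (x : ℕ) < t)).card ≤ r - 1 := by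
      have := Finset.card_le_card (Finset.filter_subset (fun x : Fin n => ¬ (x : ℕ) < t) L)
      omega
    have hqbw : ((L.filter (fun x : Fin n => ¬ (x : ℕ) < t)).card : ℝ) * bw ≤ Real.sqrt n := by
      calc ((L.filter (fun x : Fin n => ¬ (x : ℕ) < t)).card : ℝ) * bw
          ≤ ((r : ℝ) - 1) * bw := by
            apply mul_le_mul_of_nonneg_right _ hbw0
            have : ((r:ℝ) - 1) = ((r - 1 : ℕ) : ℝ) := by
              have : 1 ≤ r := hr1
              push_cast [Nat.cast_sub hr1]
              ring
            rw [this]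
            exact_mod_cast hq
        _ ≤ Real.sqrt n := hbwlose
    have hpsqrt : (p : ℝ) ≤ Real.sqrt n := by
      rcases Nat.eq_zero_or_pos p with hp0 | hp1
      · rw [hp0]; simpa using Real.sqrt_nonneg (n:ℝ)
      · -- p ≥ 1 : the filtered set P loses, so the block [t-p,t) loses, so p < s for the small
        -- winning block at t-p, hence p < θ ≤ √n
        set P := L.filter (fun x : Fin n => (x : ℕ) < t) with hPdef
        have hPsub : ∀ x ∈ P, (x : ℕ) < t := by
          intro x hx
          exact (Finset.mem_filter.mp hx).2
        have hPlose : χ P = false := by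
          by_contra hPwin
          rw [Bool.not_eq_false] at hPwin
          have := hmono P L (Finset.filter_subset _ _) hPwin
          rw [hL] at this
          exact Bool.false_ne_true this
        have hpt : p ≤ t := by
          by_cases ht0 : t = 0
          · exfalso
            obtain ⟨x, hx⟩ := Finset.card_pos.mp hp1
            have := hPsub x hx
            omega
          · have hsub : P ⊆ (univ : Finset (Fin n)).filter
                (fun x : Fin n => 0 ≤ (x:ℕ) ∧ (x:ℕ) ≤ t - 1) := by
              intro x hx
              simp only [Finset.mem_filter]
              have := hPsub x hx
              exact ⟨Finset.mem_univ _, Nat.zero_le _, by omega⟩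
            have := Finset.card_le_card hsub
            rw [interval_card _ _ (by omega)] at this
            omega
        have hblklose : χ (blk n (t - p) p) = false := by
          by_contra hblkwin
          rw [Bool.not_eq_false] at hblkwin
          have := dom_win χ H _ _ P (le_refl _)
            (dom_topblock P hPsub rfl hp1 hpt htn) hblkwin
          rw [hPlose] at this
          exact Bool.false_ne_true this
        obtain ⟨s, hs1, hsle, hswin, hsθ⟩ := hGlt (t - p) (by omega)
        have hps : p < s := by
          by_contra hsp
          push_neg at hsp
          have := hmono _ _ (blk_mono hsp) hswin
          rw [hblklose] at this
          exact Bool.false_ne_true this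
        have : (p : ℝ) < θ := lt_trans (by exact_mod_cast hps) hsθ
        linarith
    calc (p : ℝ) + ((L.filter (fun x : Fin n => ¬ (x : ℕ) < t)).card : ℝ) * bw
        ≤ Real.sqrt n + Real.sqrt n := add_le_add hpsqrt hqbw
      _ = 2 * Real.sqrt n := by ring

lemma complete_roughly_weighted (χ : Finset (Fin n) → Bool) (hn : 1 ≤ n)
    (hc : CompleteSimpleGame χ) : RoughlyWeighted χ (2 * Real.sqrt n) := by
  classical
  obtain ⟨hsg, htot⟩ := hc
  -- sort the voters by desirability
  set led : Fin n → Fin n → Bool := fun i j => decide (Desirable χ i j) with hleddef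
  have htrans : ∀ a b c : Fin n, led a b → led b c → led a c := by
    intro a b c hab hbc
    rw [hleddef] at *
    exact decide_eq_true (desirable_trans χ (of_decide_eq_true hab) (of_decide_eq_true hbc))
  have htotal : ∀ a b : Fin n, led a b || led b a := by
    intro a b
    rw [hleddef]
    rcases htot a b with h | h
    · simp [decide_eq_true h]
    · simp [decide_eq_true h]
  set L := (List.finRange n).mergeSort led with hLdef
  have hperm : L.Perm (List.finRange n) := List.mergeSort_perm _ _
  have hlen : L.length = n := by rw [hperm.length_eq, List.length_finRange]
  have hnodup : L.Nodup := hperm.symm.nodup (List.nodup_finRange n)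
  have hsorted : List.Pairwise (fun a b => led a b = true) L :=
    List.pairwise_mergeSort htrans htotal _
  set f : Fin n → Fin n := fun s => L.get (Fin.cast hlen.symm s) with hfdef
  have hinj : Function.Injective f := by
    intro a b hab
    rw [hfdef] at hab
    have := List.nodup_iff_injective_get.mp hnodup hab
    exact Fin.cast_injective _ (by exact this)
  have hbij : Function.Bijective f := (Finite.injective_iff_bijective).mp hinj
  have hdes : ∀ s t : Fin n, s ≤ t → Desirable χ (f s) (f t) := by
    intro s t hst
    rcases eq_or_lt_of_le hst with h | h
    · subst h; exact desirable_refl χ _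
    · have := List.pairwise_iff_get.mp hsorted (Fin.cast hlen.symm s) (Fin.cast hlen.symm t)
        (by simpa using h)
      exact of_decide_eq_true this
  -- the sorted game
  set χ' : Finset (Fin n) → Bool := fun S => χ (S.image f) with hχ'def
  have hsg' : SimpleGame χ' := by
    refine ⟨?_, ?_, ?_⟩
    · rw [hχ'def]; simpa using hsg.1
    · rw [hχ'def]
      simp only
      rw [Finset.image_univ_of_surjective hbij.2]
      exact hsg.2.1
    · intro S T hST hS
      rw [hχ'def] at *
      exact hsg.2.2 _ _ (Finset.image_subset_image hST) hS
  have H' : ∀ s t : Fin n, s ≤ t → Desirable χ' s t := by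
    intro s t hst S htS hsS hSwin
    rw [hχ'def]
    simp only
    rw [Finset.image_insert, Finset.image_erase hinj]
    apply hdes s t hst
    · exact Finset.mem_image_of_mem f htS
    · intro hmem
      obtain ⟨x, hx, hfx⟩ := Finset.mem_image.mp hmem
      exact hsS (by rwa [hinj hfx] at hx)
    · exact hSwin
  obtain ⟨w', hw'win, hw'lose⟩ := sorted_roughly_weighted χ' hn hsg' H'
  -- transport the weights back
  set e := Equiv.ofBijective f hbij with hedef
  refine ⟨fun i => w' (e.symm i), ?_, ?_⟩
  all_goals {
    intro S hS
    have hSim : χ' (S.image e.symm) = χ S := by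
      rw [hχ'def]
      simp only
      have : (S.image (e.symm : Fin n → Fin n)).image f = S := by
        rw [Finset.image_image]
        have hcomp : f ∘ (e.symm : Fin n → Fin n) = id := by
          funext x
          exact e.apply_symm_apply x
        rw [hcomp, Finset.image_id]
      rw [this]
    have hsum : ∑ i ∈ S, w' (e.symm i) = ∑ j ∈ S.image (e.symm : Fin n → Fin n), w' j := by
      rw [Finset.sum_image (fun x _ y _ h => e.symm.injective h)]
    first
    | · rw [hsum]; exact hw'win _ (by rw [hSim]; exact hS)
    | · rw [hsum]; exact hw'lose _ (by rw [hSim]; exact hS)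
  }

lemma mu_le_two_sqrt {n : ℕ} (χ : Finset (Fin n) → Bool) (hn : 1 ≤ n)
    (hc : CompleteSimpleGame χ) : mu χ ≤ 2 * Real.sqrt n := by
  have h1 : (1:ℝ) ≤ 2 * Real.sqrt n := by
    have : (1:ℝ) ≤ Real.sqrt n := by
      rw [show (1:ℝ) = Real.sqrt 1 by simp]
      exact Real.sqrt_le_sqrt (by exact_mod_cast hn)
    linarith
  exact csInf_le ⟨1, fun x hx => hx.1⟩ ⟨h1, complete_roughly_weighted χ hn hc⟩


end Aux

/-- the critical threshold value of complete simple games on `n`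
voters is in `O(n · log log n / log n)`. -/
theorem complete_simple_game_critical_threshold_bigO :
    ∃ C : ℝ, 0 < C ∧ ∃ n₀ : ℕ, ∀ n : ℕ, n₀ ≤ n →
      ∀ χ : Finset (Fin n) → Bool, CompleteSimpleGame χ →
        mu χ ≤ C * ((n : ℝ) * Real.log (Real.log n) / Real.log n) := by
  refine ⟨4, by norm_num, 16, ?_⟩
  intro n hn χ hc
  have hn1 : 1 ≤ n := by omega
  have hmu := mu_le_two_sqrt χ hn1 hc
  have hs_pos : (0:ℝ) < Real.sqrt n := Real.sqrt_pos.mpr (by exact_mod_cast hn1)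
  have hss : Real.sqrt n * Real.sqrt n = (n:ℝ) := Real.mul_self_sqrt (by positivity)
  have hn16 : (16:ℝ) ≤ (n:ℝ) := by exact_mod_cast hn
  have hlog16 : Real.exp 1 < Real.log 16 := by
    have h16 : (16:ℝ) = 2 ^ (4:ℕ) := by norm_num
    rw [h16, Real.log_pow]
    have := Real.log_two_gt_d9
    have := Real.exp_one_lt_d9
    push_cast
    nlinarith
  have hlogn : Real.exp 1 < Real.log n := by
    calc Real.exp 1 < Real.log 16 := hlog16
      _ ≤ Real.log n := Real.log_le_log (by norm_num) hn16
  have hL_pos : (0:ℝ) < Real.log n := lt_trans (Real.exp_pos 1) hlogn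
  have hA : (1:ℝ) ≤ Real.log (Real.log n) := by
    rw [Real.le_log_iff_exp_le hL_pos]
    exact le_of_lt hlogn
  -- log n ≤ 2 √n
  have hlog_le : Real.log n ≤ 2 * Real.sqrt n := by
    have h1 : Real.log (Real.sqrt n) = Real.log n / 2 := Real.log_sqrt (by positivity)
    have h2 : Real.log (Real.sqrt n) ≤ Real.sqrt n - 1 := Real.log_le_sub_one_of_pos hs_pos
    nlinarith
  -- conclude
  have hkey : 2 * Real.sqrt n ≤ 4 * ((n : ℝ) * Real.log (Real.log n) / Real.log n) := by
    rw [mul_div_assoc' , le_div_iff₀ hL_pos]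
    have hnn : (0:ℝ) ≤ (n:ℝ) := by positivity
    nlinarith [mul_le_mul_of_nonneg_left hlog_le (by positivity : (0:ℝ) ≤ 2 * Real.sqrt n),
      mul_le_mul_of_nonneg_left hA hnn]
  linarith
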